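/- Let k be a field of characteristic 2, a ∈ k, and let P ∈ k[x] be a separable polynomial of degree 3 or 4. Then the affine surface defined by y² + y·z + a·z² = P(x) in 𝔸³ is smooth over k; that is, the quotient ring k[x, y, z]/(y² + yz + az² − P(x)) is a smooth k-algebra. -/

import Mathlib

open MvPolynomial

/-- For `k` a field of characteristic `2`, `a ∈ k` and `P ∈ k[x]` a separable polynomial of
degree `3` or `4`, the affine surface `y² + yz + az² = P(x)` in `𝔸³` is smooth over `k`:
the coordinate ring `k[x, y, z]/(y² + yz + az² − P(x))` is a smooth `k`-algebra. -/
theorem chatelet_affine_piece_smooth (k : Type*) [Field k] [CharP k 2] (a : k)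
    (P : Polynomial k) (hsep : P.Separable)
    (hdeg : P.natDegree = 3 ∨ P.natDegree = 4) :
    Algebra.Smooth k
      (MvPolynomial (Fin 3) k ⧸
        Ideal.span {(X 1 : MvPolynomial (Fin 3) k) ^ 2 + X 1 * X 2 + C a * X 2 ^ 2 -
          Polynomial.aeval (X 0 : MvPolynomial (Fin 3) k) P}) := by
  classical
  obtain ⟨u, v, huv⟩ := hsep
  set R3 := MvPolynomial (Fin 3) k with hR3
  set g : R3 := (X 1 : MvPolynomial (Fin 3) k) ^ 2 + X 1 * X 2 + C a * X 2 ^ 2 -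
      Polynomial.aeval (X 0 : MvPolynomial (Fin 3) k) P with hgdef
  have htwo : (2 : R3) = 0 := by
    have : ((2 : ℕ) : R3) = 0 := CharP.cast_eq_zero R3 2
    simpa using this
  set U : R3 := Polynomial.aeval (X 0 : R3) u with hU
  set V : R3 := Polynomial.aeval (X 0 : R3) v with hV
  have huv' : U * Polynomial.aeval (X 0 : R3) P
      + V * Polynomial.aeval (X 0 : R3) P.derivative = 1 := by
    have := congrArg (Polynomial.aeval (X 0 : R3)) huv
    simpa [map_add, map_mul] using this
  set w : Fin 3 → R3 := ![X 0 + g * V, X 1 + g * (U * (X 1 + C a * X 2)), X 2 + g * (U * X 1)]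
    with hw
  obtain ⟨K, hK⟩ := (P.map (algebraMap k R3)).binomExpansion (X 0) (g * V)
  have hmapeval : ∀ t : R3, (P.map (algebraMap k R3)).eval t = Polynomial.aeval t P := by
    intro t; rw [Polynomial.aeval_def, Polynomial.eval_map]
  have hmapeval' : (P.map (algebraMap k R3)).derivative.eval (X 0)
      = Polynomial.aeval (X 0 : R3) P.derivative := by
    rw [Polynomial.derivative_map, Polynomial.aeval_def, Polynomial.eval_map]
  rw [hmapeval, hmapeval, hmapeval'] at hK
  set c : R3 := U + (U * (X 1 + C a * X 2)) ^ 2 + (U * (X 1 + C a * X 2)) * (U * X 1)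
      + C a * (U * X 1) ^ 2 - K * V ^ 2 with hc
  have key : aeval w g = g ^ 2 * c := by
    have expand : aeval w g = (w 1) ^ 2 + (w 1) * (w 2) + C a * (w 2) ^ 2
        - Polynomial.aeval (w 0) P := by
      conv_lhs => rw [hgdef]
      simp only [map_sub, map_add, map_mul, map_pow, aeval_X, aeval_C,
        ← Polynomial.aeval_algHom_apply]
      rw [MvPolynomial.algebraMap_eq]
    rw [expand, hw, hc]
    simp only [Matrix.cons_val_zero, Matrix.cons_val_one, Matrix.head_cons,
      Matrix.cons_val_two, Matrix.tail_cons]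
    linear_combination (g * U * Polynomial.aeval (X 0 : R3) P + g * X 1 * (U * (X 1 + C a * X 2))
        + C a * g * X 2 * (U * X 1)) * htwo
      - (g * U + 1) * hgdef - g * huv' - hK
  set I : Ideal R3 := Ideal.span {g} with hI
  constructor
  · -- Formal smoothness via a section of the square-zero thickening
    let f : R3 →ₐ[k] R3 ⧸ I := Ideal.Quotient.mkₐ k I
    have hker : RingHom.ker (f : R3 →+* R3 ⧸ I) = I := Ideal.Quotient.mkₐ_ker k I
    let F : R3 →ₐ[k] R3 ⧸ I ^ 2 := (Ideal.Quotient.mkₐ k (I ^ 2)).comp (aeval w)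
    have hFg : F g = 0 := by
      have hmem : aeval w g ∈ I ^ 2 := by
        rw [hI, Ideal.span_singleton_pow, Ideal.mem_span_singleton, key]
        exact Dvd.intro c rfl
      have : F g = Ideal.Quotient.mk (I ^ 2) (aeval w g) := rfl
      rw [this, Ideal.Quotient.eq_zero_iff_mem]
      exact hmem
    have hF : ∀ x ∈ I, F x = 0 := by
      intro x hx
      rw [hI, Ideal.mem_span_singleton] at hx
      obtain ⟨d, rfl⟩ := hx
      rw [map_mul, hFg, zero_mul]
    let s0 : R3 ⧸ I →ₐ[k] R3 ⧸ I ^ 2 := Ideal.Quotient.liftₐ I F hF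
    have hkerpow : I ^ 2 = RingHom.ker (f : R3 →+* R3 ⧸ I) ^ 2 := by rw [hker]
    let e := Ideal.quotientEquivAlgOfEq k hkerpow
    have hfs : Algebra.FormallySmooth k R3 :=
      Algebra.FormallySmooth.of_equiv
        (MvPolynomial.renameEquiv k (Equiv.ulift.{0, 0} (α := Fin 3)).symm).symm
    refine Algebra.FormallySmooth.of_split f (e.toAlgHom.comp s0) ?_
    have hcomp : (f.kerSquareLift.comp (e.toAlgHom.comp s0)).comp f
        = (AlgHom.id k (R3 ⧸ I)).comp f := by
      apply MvPolynomial.algHom_ext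
      intro i
      have h1 : s0 (f (X i)) = Ideal.Quotient.mk (I ^ 2) (w i) := by
        simp only [f, s0, F, Ideal.Quotient.mkₐ_eq_mk, Ideal.Quotient.liftₐ_apply,
          Ideal.Quotient.lift_mk, AlgHom.coe_comp, Function.comp_apply, aeval_X]
        exact congrArg _ (aeval_X w i)
      have h2 : f.kerSquareLift (e.toAlgHom (Ideal.Quotient.mk (I ^ 2) (w i))) = f (w i) := by
        rw [show e.toAlgHom (Ideal.Quotient.mk (I ^ 2) (w i))
            = Ideal.Quotient.mk (RingHom.ker (f : R3 →+* R3 ⧸ I) ^ 2) (w i) from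
          Ideal.quotientEquivAlgOfEq_mk k hkerpow (w i)]
        rfl
      show f.kerSquareLift (e.toAlgHom (s0 (f (X i)))) = f (X i)
      rw [h1, h2]
      show Ideal.Quotient.mk I (w i) = Ideal.Quotient.mk I (X i)
      rw [Ideal.Quotient.mk_eq_mk_iff_sub_mem, hI, Ideal.mem_span_singleton]
      have e0 : w 0 = X 0 + g * V := by rw [hw]; rfl
      have e1 : w 1 = X 1 + g * (U * (X 1 + C a * X 2)) := by rw [hw]; rfl
      have e2 : w 2 = X 2 + g * (U * X 1) := by rw [hw]; rfl
      match i with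
      | 0 => rw [e0]; exact ⟨V, by ring⟩
      | 1 => rw [e1]; exact ⟨U * (X 1 + C a * X 2), by ring⟩
      | 2 => rw [e2]; exact ⟨U * X 1, by ring⟩
    apply AlgHom.ext
    intro x
    obtain ⟨p, rfl⟩ := Ideal.Quotient.mk_surjective x
    exact AlgHom.congr_fun hcomp p
  · -- Finite presentation
    refine Algebra.FinitePresentation.quotient ⟨{g}, ?_⟩
    simp [hI]
    rfl
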